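/- Assume D = 0 and T > 0, let G be a connected graph, and let a ∈ ℝ^L have all components strictly positive. Define the generator matrix Q(a) by Q(a)_{ij} = T·a_j/N_i(a) when i ~ j, Q(a)_{ij} = 0 when i ≠ j and i is not adjacent to j, and Q(a)_{ii} = −∑_{j ≠ i} Q(a)_{ij}. Let Z(a) = ∑_{i} a_i·N_i(a) and π_i = a_i·N_i(a)/Z(a). Then π is a probability vector (π_i > 0 and ∑_i π_i = 1), Q(a) is reversible with respect to π, i.e. π_i·Q(a)_{ij} = π_j·Q(a)_{ji} for all i ≠ j, and π is invariant: ∑_{i} π_i·Q(a)_{ij} = 0 for every j. -/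

import Mathlib

open Finset Filter

/-- `auxN G κ a i = κ + ∑_{j ~ i} a_j`. -/
noncomputable def auxN {L : ℕ} (G : SimpleGraph (Fin L)) [DecidableRel G.Adj] (κ : ℝ)
    (a : Fin L → ℝ) (i : Fin L) : ℝ :=
  κ + ∑ j ∈ G.neighborFinset i, a j

/-- The auxin transport vector field
`f_i(a) = D·∑_{k ~ i}(a_k − a_i) + T·∑_{k ~ i}(a_k·a_i/N_k(a) − a_i·a_k/N_i(a))`. -/
noncomputable def auxF {L : ℕ} (G : SimpleGraph (Fin L)) [DecidableRel G.Adj] (κ D T : ℝ)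
    (a : Fin L → ℝ) (i : Fin L) : ℝ :=
  D * ∑ k ∈ G.neighborFinset i, (a k - a i) +
    T * ∑ k ∈ G.neighborFinset i,
      (a k * a i / auxN G κ a k - a i * a k / auxN G κ a i)

/-- For the pure transport generator (`D = 0`, `T > 0`) on a connected graph
and a strictly positive configuration `a`, the measure `π_i = a_i·N_i(a)/Z(a)` is a
probability vector, `Q(a)` is reversible with respect to `π`, and `π` is invariant. -/
theorem auxin_generator_reversible {L : ℕ} (hL : 1 ≤ L) (G : SimpleGraph (Fin L))
    [DecidableRel G.Adj] (hG : G.Connected) (κ T : ℝ) (hκ : 0 < κ) (hT : 0 < T)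
    (a : Fin L → ℝ) (ha : ∀ i, 0 < a i)
    (Q : Matrix (Fin L) (Fin L) ℝ)
    (hQoff : ∀ i j, i ≠ j →
      Q i j = if G.Adj i j then T * a j / auxN G κ a i else 0)
    (hQdiag : ∀ i, Q i i = -∑ j ∈ Finset.univ.erase i, Q i j)
    (Z : ℝ) (hZ : Z = ∑ i, a i * auxN G κ a i)
    (π : Fin L → ℝ) (hπ : ∀ i, π i = a i * auxN G κ a i / Z) :
    (∀ i, 0 < π i) ∧ (∑ i, π i = 1) ∧
    (∀ i j, i ≠ j → π i * Q i j = π j * Q j i) ∧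
    (∀ j, ∑ i, π i * Q i j = 0) := by
  have hN : ∀ i, 0 < auxN G κ a i := by
    intro i
    have : (0:ℝ) ≤ ∑ j ∈ G.neighborFinset i, a j :=
      Finset.sum_nonneg fun j _ => (ha j).le
    unfold auxN; linarith
  have hZpos : 0 < Z := by
    rw [hZ]
    apply Finset.sum_pos
    · intro i _; exact mul_pos (ha i) (hN i)
    · exact Finset.univ_nonempty_iff.mpr (Fin.pos_iff_nonempty.mp hL)
  have hπpos : ∀ i, 0 < π i := fun i => by
    rw [hπ]; exact div_pos (mul_pos (ha i) (hN i)) hZpos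
  have hsum : ∑ i, π i = 1 := by
    simp only [hπ, ← Finset.sum_div, ← hZ, div_self hZpos.ne']
  have hrev : ∀ i j, i ≠ j → π i * Q i j = π j * Q j i := by
    intro i j hij
    rw [hπ, hπ, hQoff i j hij, hQoff j i hij.symm]
    by_cases h : G.Adj i j
    · rw [if_pos h, if_pos h.symm]
      field_simp [(hN i).ne', (hN j).ne']
    · rw [if_neg h, if_neg (fun h' => h h'.symm), mul_zero, mul_zero]
  refine ⟨hπpos, hsum, hrev, ?_⟩
  intro j
  have hsplit : ∑ i, π i * Q i j =
      (∑ i ∈ Finset.univ.erase j, π i * Q i j) + π j * Q j j := by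
    rw [Finset.sum_erase_add _ _ (Finset.mem_univ j)]
  rw [hsplit, hQdiag j]
  have : ∑ i ∈ Finset.univ.erase j, π i * Q i j
      = ∑ i ∈ Finset.univ.erase j, π j * Q j i := by
    apply Finset.sum_congr rfl
    intro i hi
    exact hrev i j (Finset.ne_of_mem_erase hi)
  rw [this, ← Finset.mul_sum]
  ring
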